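/- Let A and B be positive definite d×d complex matrices and let N(·) be any unitarily invariant norm on M_d(ℂ). Then for every C in the unitary orbit O_B = { U*BU : U unitary }, one has N(log(A^{-1/2} C A^{-1/2})) ≥ N(D_{log λ(B) − log λ(A)}), where D_{log λ(B) − log λ(A)} is the diagonal matrix with diagonal entries log λ_i(B) − log λ_i(A), i = 1, …, d. -/

import Mathlib

set_option maxHeartbeats 1000000


open Matrix Polynomial
open scoped ComplexOrder

/-- The vector `x` rearranged in non-increasing order. -/
noncomputable def sortDesc {d : ℕ} (x : Fin d → ℝ) : Fin d → ℝ :=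
  fun i => x (Tuple.sort x i.rev)

/-- The vector `x` rearranged in non-decreasing order. -/
noncomputable def sortAsc {d : ℕ} (x : Fin d → ℝ) : Fin d → ℝ :=
  fun i => x (Tuple.sort x i)

/-- `x` is submajorized by `y`. -/
noncomputable def Submajorizes {d : ℕ} (x y : Fin d → ℝ) : Prop :=
  ∀ k : Fin d, ∑ i ∈ Finset.Iic k, sortDesc x i ≤ ∑ i ∈ Finset.Iic k, sortDesc y i

/-- `x` is majorized by `y`. -/
noncomputable def Majorizes {d : ℕ} (x y : Fin d → ℝ) : Prop :=
  Submajorizes x y ∧ ∑ i, x i = ∑ i, y i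

/-- The (Hermitian) matrix logarithm of a Hermitian (in particular, positive definite)
matrix, defined via the spectral theorem; junk value `0` on non-Hermitian matrices. -/
noncomputable def matLog {d : ℕ} (P : Matrix (Fin d) (Fin d) ℂ) : Matrix (Fin d) (Fin d) ℂ :=
  if h : P.IsHermitian then
    (Matrix.IsHermitian.eigenvectorUnitary h : Matrix (Fin d) (Fin d) ℂ) *
      Matrix.diagonal (fun i => (Real.log (h.eigenvalues i) : ℂ)) *
      (star (Matrix.IsHermitian.eigenvectorUnitary h) : Matrix (Fin d) (Fin d) ℂ)
  else 0

/-- The positive semidefinite square root of a positive semidefinite matrix -/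
noncomputable def Matrix.PosSemidef.sqrt {n 𝕜 : Type*} [Fintype n] [DecidableEq n] [RCLike 𝕜]
    {A : Matrix n n 𝕜} (hA : A.PosSemidef) : Matrix n n 𝕜 :=
  hA.1.eigenvectorUnitary.1 * diagonal ((↑) ∘ (√·) ∘ hA.1.eigenvalues) *
  (star hA.1.eigenvectorUnitary : Matrix n n 𝕜)



-- ### Auxiliary machinery ###

section basics
variable {d : ℕ}

noncomputable def descPerm (x : Fin d → ℝ) : Equiv.Perm (Fin d) :=
  Fin.revPerm.trans (Tuple.sort x)

lemma sortDesc_eq_comp (x : Fin d → ℝ) : sortDesc x = x ∘ (descPerm x) := rfl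

lemma sortDesc_antitone (x : Fin d → ℝ) : Antitone (sortDesc x) := by
  intro i j hij
  have h := Tuple.monotone_sort x
  exact h (by simpa using Fin.rev_le_rev.mpr hij : (j.rev ≤ i.rev))

lemma sortDesc_sum (x : Fin d → ℝ) : ∑ i, sortDesc x i = ∑ i, x i := by
  rw [sortDesc_eq_comp]
  exact Equiv.sum_comp (descPerm x) x

lemma sortDesc_prod (x : Fin d → ℝ) : ∏ i, sortDesc x i = ∏ i, x i := by
  rw [sortDesc_eq_comp]
  exact Equiv.prod_comp (descPerm x) x

/-- permutation matrix over ℂ -/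
def permM (e : Equiv.Perm (Fin d)) : Matrix (Fin d) (Fin d) ℂ :=
  e.toPEquiv.toMatrix

lemma permM_conjTranspose (e : Equiv.Perm (Fin d)) : (permM e)ᴴ = permM e.symm := by
  ext i j
  simp only [permM, conjTranspose_apply, PEquiv.toMatrix_apply, Equiv.toPEquiv_apply,
    Option.mem_def, Option.some.injEq]
  rw [apply_ite (star ·)]
  simp only [star_one, star_zero]
  congr 1
  simp only [eq_iff_iff]
  constructor
  · rintro rfl; simp
  · rintro rfl; simp

lemma permM_mul_symm (e : Equiv.Perm (Fin d)) : permM e * permM e.symm = 1 := by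
  simp only [permM, ← PEquiv.toMatrix_trans, ← Equiv.toPEquiv_trans]
  simp

lemma permM_mem (e : Equiv.Perm (Fin d)) : permM e ∈ Matrix.unitaryGroup (Fin d) ℂ := by
  rw [Matrix.mem_unitaryGroup_iff]
  rw [Matrix.star_eq_conjTranspose, permM_conjTranspose]
  exact permM_mul_symm e

lemma permM_conj (e : Equiv.Perm (Fin d)) (g : Fin d → ℂ) :
    permM e * Matrix.diagonal g * (permM e)ᴴ = Matrix.diagonal (g ∘ e) := by
  rw [permM_conjTranspose]
  simp only [permM, PEquiv.toMatrix_toPEquiv_mul, PEquiv.mul_toMatrix_toPEquiv]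
  rw [Matrix.submatrix_submatrix]
  have h2 : (Matrix.diagonal g).submatrix (⇑e ∘ id) (id ∘ ⇑e.symm.symm) =
      (Matrix.diagonal g).submatrix e e := rfl
  rw [h2, Matrix.submatrix_diagonal_equiv]

end basics


section Npart
variable {d : ℕ}

def diagC (w : Fin d → ℝ) : Matrix (Fin d) (Fin d) ℂ :=
  Matrix.diagonal (fun i => (w i : ℂ))

variable (N : Matrix (Fin d) (Fin d) ℂ → ℝ)

lemma N_perm (hN_ui : ∀ (X U V : Matrix (Fin d) (Fin d) ℂ), U ∈ Matrix.unitaryGroup (Fin d) ℂ →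
      V ∈ Matrix.unitaryGroup (Fin d) ℂ → N (U * X * V) = N X)
    (g : Fin d → ℝ) (e : Equiv.Perm (Fin d)) :
    N (diagC (g ∘ e)) = N (diagC g) := by
  have h : diagC (g ∘ e) = permM e * diagC g * (permM e)ᴴ := by
    unfold diagC
    rw [permM_conj e (fun i => (g i : ℂ))]
    rfl
  rw [h]
  exact hN_ui _ _ _ (permM_mem e) (by rw [permM_conjTranspose]; exact permM_mem e.symm)

lemma N_convex (hN_add : ∀ X Y, N (X + Y) ≤ N X + N Y)
    (hN_smul : ∀ (c : ℂ) (X), N (c • X) = ‖c‖ * N X)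
    {s : ℝ} (hs0 : 0 ≤ s) (hs1 : s ≤ 1) (Xm Ym : Matrix (Fin d) (Fin d) ℂ) :
    N (((1 - s : ℝ) : ℂ) • Xm + ((s : ℝ) : ℂ) • Ym) ≤ (1 - s) * N Xm + s * N Ym := by
  refine (hN_add _ _).trans ?_
  rw [hN_smul, hN_smul]
  simp only [Complex.norm_real, Real.norm_eq_abs]
  rw [abs_of_nonneg (by linarith), abs_of_nonneg hs0]

/-- sums over initial segments indexed by a natural number -/
def FF (n : ℕ) : Finset (Fin d) := Finset.univ.filter (fun i => (i : ℕ) < n)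

lemma FF_zero : (FF 0 : Finset (Fin d)) = ∅ := by simp [FF]
lemma FF_big {n : ℕ} (h : d ≤ n) : (FF n : Finset (Fin d)) = Finset.univ := by
  ext i
  simp only [FF, Finset.mem_filter, Finset.mem_univ, true_and, iff_true]
  exact lt_of_lt_of_le i.isLt h
lemma FF_succ_eq_Iic {k : Fin d} : (FF ((k : ℕ) + 1) : Finset (Fin d)) = Finset.Iic k := by
  ext i
  simp only [FF, Finset.mem_filter, Finset.mem_univ, true_and, Finset.mem_Iic,
    Nat.lt_succ_iff, Fin.le_def]
lemma mem_FF {n : ℕ} {i : Fin d} : i ∈ (FF n : Finset (Fin d)) ↔ (i : ℕ) < n := by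
  simp only [FF, Finset.mem_filter, Finset.mem_univ, true_and]

lemma maj_le (hN_add : ∀ X Y, N (X + Y) ≤ N X + N Y)
    (hN_smul : ∀ (c : ℂ) (X), N (c • X) = ‖c‖ * N X)
    (hN_ui : ∀ (X U V : Matrix (Fin d) (Fin d) ℂ), U ∈ Matrix.unitaryGroup (Fin d) ℂ →
      V ∈ Matrix.unitaryGroup (Fin d) ℂ → N (U * X * V) = N X) :
    ∀ (m : ℕ) (v w : Fin d → ℝ), Antitone v → Antitone w →
    (∀ n : ℕ, ∑ i ∈ FF n, w i ≤ ∑ i ∈ FF n, v i) →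
    (∑ i, w i = ∑ i, v i) →
    ((Finset.univ.filter (fun i => w i ≠ v i)).card ≤ m) →
    N (diagC w) ≤ N (diagC v) := by
  intro m
  induction m with
  | zero =>
    intro v w _ _ _ _ hcard
    have : w = v := by
      funext i
      by_contra hne
      have : i ∈ Finset.univ.filter (fun i => w i ≠ v i) := by simp [hne]
      have := Finset.card_pos.mpr ⟨i, this⟩
      omega
    rw [this]
  | succ m IH =>
    intro v w hv hw hpre htot hcard
    by_cases hwv : w = v
    · rw [hwv]
    -- there is an index where they differ
    have hne : ∃ i, w i ≠ v i := by
      by_contra h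
      push_neg at h
      exact hwv (funext h)
    -- there is an index with v i < w i
    have hgt : ∃ i, v i < w i := by
      by_contra h
      push_neg at h
      obtain ⟨i0, hi0⟩ := hne
      have hlt : w i0 < v i0 := lt_of_le_of_ne (h i0) hi0
      have : ∑ i, w i < ∑ i, v i :=
        Finset.sum_lt_sum (fun i _ => h i) ⟨i0, Finset.mem_univ _, hlt⟩
      linarith
    set K := Finset.univ.filter (fun i => v i < w i) with hK
    have hKne : K.Nonempty := by
      obtain ⟨i, hi⟩ := hgt
      exact ⟨i, by simp [hK, hi]⟩
    set k := K.min' hKne with hkdef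
    have hk : v k < w k := by
      have h := K.min'_mem hKne
      exact (Finset.mem_filter.mp h).2
    have hkmin : ∀ i, i < k → w i ≤ v i := by
      intro i hik
      by_contra hcon
      push_neg at hcon
      have : i ∈ K := by simp [hK, hcon]
      exact absurd (K.min'_le i this) (by exact not_le.mpr hik)
    -- there is j < k with w j < v j
    have hJne : (Finset.univ.filter (fun i => i < k ∧ w i < v i)).Nonempty := by
      by_contra hcon
      rw [Finset.not_nonempty_iff_eq_empty] at hcon
      have heqbelow : ∀ i, i < k → w i = v i := by
        intro i hik
        refine le_antisymm (hkmin i hik) ?_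
        by_contra hcon2
        push_neg at hcon2
        have : i ∈ Finset.univ.filter (fun i => i < k ∧ w i < v i) := by
          simp [hik, hcon2]
        rw [hcon] at this
        exact absurd this (Finset.notMem_empty i)
      have h1 : ∑ i ∈ Finset.Iic k, v i < ∑ i ∈ Finset.Iic k, w i := by
        rw [← Finset.Iio_insert, Finset.sum_insert (by simp), Finset.sum_insert (by simp)]
        have : ∑ i ∈ Finset.Iio k, w i = ∑ i ∈ Finset.Iio k, v i :=
          Finset.sum_congr rfl (fun i hi => heqbelow i (by simpa using hi))
        rw [this]
        linarith
      have h2 := hpre ((k : ℕ) + 1)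
      rw [FF_succ_eq_Iic] at h2
      linarith
    set J := Finset.univ.filter (fun i => i < k ∧ w i < v i) with hJdef
    set j := J.max' hJne with hjdef
    have hjprop : j < k ∧ w j < v j := by
      have h := J.max'_mem hJne
      exact (Finset.mem_filter.mp h).2
    obtain ⟨hjk, hwj⟩ := hjprop
    have hbetween : ∀ i, j < i → i < k → w i = v i := by
      intro i hji hik
      refine le_antisymm (hkmin i hik) ?_
      by_contra hcon
      push_neg at hcon
      have : i ∈ J := by simp [hJdef, hik, hcon]
      exact absurd (J.le_max' i this) (by exact not_le.mpr hji)
    set δ := min (v j - w j) (w k - v k) with hδdef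
    have hδpos : 0 < δ := lt_min (by linarith) (by linarith)
    have hδ1 : δ ≤ v j - w j := min_le_left _ _
    have hδ2 : δ ≤ w k - v k := min_le_right _ _
    have hwjk : w k ≤ w j := hw hjk.le
    have hvkj : v k < v j := by linarith
    set s : ℝ := δ / (v j - v k) with hsdef
    have hs0 : 0 < s := div_pos hδpos (by linarith)
    have hs1 : s ≤ 1 := by
      rw [div_le_one (by linarith)]
      linarith
    have hsδ : s * (v j - v k) = δ := div_mul_cancel₀ δ (by linarith : v j - v k ≠ 0)
    set v' : Fin d → ℝ := fun i => if i = j then v j - δ else if i = k then v k + δ else v i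
      with hv'def
    have hjkne : j ≠ k := ne_of_lt hjk
    have hv'j : v' j = v j - δ := by simp [hv'def]
    have hv'k : v' k = v k + δ := by simp [hv'def, hjkne.symm]
    have hv'other : ∀ i, i ≠ j → i ≠ k → v' i = v i := by
      intro i h1 h2; simp [hv'def, h1, h2]
    have hwjv'j : w j ≤ v' j := by rw [hv'j]; linarith
    have hv'kwk : v' k ≤ w k := by rw [hv'k]; linarith
    -- antitone v'
    have hv' : Antitone v' := by
      intro i1 i2 h12
      by_cases h2j : i2 = j
      · by_cases h1j : i1 = j
        · rw [h1j, h2j]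
        · have hi1j : i1 < j := by rw [h2j] at h12; exact lt_of_le_of_ne h12 h1j
          have hi1k : i1 ≠ k := ne_of_lt (lt_trans hi1j hjk)
          rw [h2j, hv'j, hv'other i1 (ne_of_lt hi1j) hi1k]
          have := hv hi1j.le
          linarith
      · by_cases h2k : i2 = k
        · by_cases h1k : i1 = k
          · rw [h1k, h2k]
          · by_cases h1j : i1 = j
            · rw [h2k, h1j, hv'k, hv'j]; linarith
            · have hi1k : i1 < k := by rw [h2k] at h12; exact lt_of_le_of_ne h12 h1k
              rw [h2k, hv'k, hv'other i1 h1j h1k]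
              rcases lt_or_gt_of_ne h1j with hlt | hgt
              · have := hv hlt.le
                linarith
              · have heq := hbetween i1 hgt hi1k
                have h3 : w k ≤ w i1 := hw hi1k.le
                linarith
        · rw [hv'other i2 h2j h2k]
          by_cases h1j : i1 = j
          · have hji2 : j < i2 := by rw [h1j] at h12; exact lt_of_le_of_ne h12 (Ne.symm h2j)
            rw [h1j, hv'j]
            rcases lt_or_ge i2 k with hik | hki
            · have heq := hbetween i2 hji2 hik
              have h3 : w i2 ≤ w j := hw hji2.le
              linarith
            · have hik : k < i2 := lt_of_le_of_ne hki (fun hh => h2k hh.symm)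
              have h3 : v i2 ≤ v k := hv hik.le
              linarith
          · by_cases h1k : i1 = k
            · have h3 : k < i2 := by rw [h1k] at h12; exact lt_of_le_of_ne h12 (Ne.symm h2k)
              rw [h1k, hv'k]
              have := hv h3.le
              linarith
            · rw [hv'other i1 h1j h1k]; exact hv h12
    -- prefix sums for v'
    have hv'sum : ∀ (T : Finset (Fin d)), ∑ i ∈ T, v' i =
        ∑ i ∈ T, v i + (if k ∈ T then δ else 0) - (if j ∈ T then δ else 0) := by
      intro T
      have : ∀ i, v' i = v i + (if i = k then δ else 0) - (if i = j then δ else 0) := by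
        intro i
        rcases eq_or_ne i j with rfl | h1
        · simp [hv'j, hjkne]
        · rcases eq_or_ne i k with rfl | h2
          · simp [hv'k, h1]
          · simp [hv'other i h1 h2, h1, h2]
      simp_rw [this]
      rw [Finset.sum_sub_distrib, Finset.sum_add_distrib, Finset.sum_ite_eq' T k,
        Finset.sum_ite_eq' T j]
    have hpre' : ∀ n : ℕ, ∑ i ∈ FF n, w i ≤ ∑ i ∈ FF n, v' i := by
      intro n
      rw [hv'sum]
      by_cases hjn : (j : ℕ) < n
      · by_cases hkn : (k : ℕ) < n
        · simp only [if_pos (mem_FF.mpr hjn), if_pos (mem_FF.mpr hkn)]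
          have := hpre n
          linarith
        · -- j < n ≤ k
          simp only [if_pos (mem_FF.mpr hjn), if_neg (fun h => hkn (mem_FF.mp h))]
          have key : δ ≤ ∑ i ∈ FF n, (v i - w i) := by
            have hsub : FF ((j : ℕ) + 1) ⊆ (FF n : Finset (Fin d)) := by
              intro i hi
              rw [mem_FF] at hi ⊢
              omega
            have hzero : ∀ i ∈ (FF n : Finset (Fin d)), i ∉ (FF ((j : ℕ)+1) : Finset (Fin d)) →
                v i - w i = 0 := by
              intro i hi hni
              rw [mem_FF] at hi
              rw [mem_FF] at hni
              push_neg at hni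
              have hji : j < i := by
                rw [Fin.lt_def]; omega
              have hik : i < k := by
                rw [Fin.lt_def]
                have := hi
                push_neg at hkn
                omega
              rw [hbetween i hji hik]
              ring
            have heq : ∑ i ∈ (FF ((j:ℕ)+1) : Finset (Fin d)), (v i - w i)
                = ∑ i ∈ FF n, (v i - w i) := Finset.sum_subset hsub hzero
            rw [← heq]
            have hsplit : (FF ((j:ℕ)+1) : Finset (Fin d)) = insert j (FF (j:ℕ)) := by
              ext i
              simp only [mem_FF, Finset.mem_insert]
              constructor
              · intro h
                rcases Nat.lt_succ_iff_lt_or_eq.mp h with h | h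
                · exact Or.inr h
                · exact Or.inl (Fin.ext h)
              · rintro (rfl | h)
                · omega
                · omega
            rw [hsplit, Finset.sum_insert (by rw [mem_FF]; omega)]
            have := hpre (j : ℕ)
            have h0 : 0 ≤ ∑ i ∈ (FF (j:ℕ) : Finset (Fin d)), (v i - w i) := by
              rw [Finset.sum_sub_distrib]
              linarith
            linarith
          rw [Finset.sum_sub_distrib] at key
          linarith
      · -- n ≤ j < k
        have hkn : ¬ ((k:ℕ) < n) := by
          have : (j:ℕ) < (k:ℕ) := hjk
          omega
        simp only [if_neg (fun h => hjn (mem_FF.mp h)), if_neg (fun h => hkn (mem_FF.mp h))]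
        have := hpre n
        linarith
    have htot' : ∑ i, w i = ∑ i, v' i := by
      rw [hv'sum]
      simp only [Finset.mem_univ, if_pos]
      linarith
    -- cardinality decreases
    have hcard' : (Finset.univ.filter (fun i => w i ≠ v' i)).card ≤ m := by
      have hone : v' j = w j ∨ v' k = w k := by
        rcases le_total (v j - w j) (w k - v k) with h | h
        · left; rw [hv'j, hδdef, min_eq_left h]; ring
        · right; rw [hv'k, hδdef, min_eq_right h]; ring
      rcases hone with heq | heq
      · have hsub : Finset.univ.filter (fun i => w i ≠ v' i) ⊆
            (Finset.univ.filter (fun i => w i ≠ v i)).erase j := by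
          intro i hi
          simp only [Finset.mem_filter, Finset.mem_univ, true_and] at hi
          rw [Finset.mem_erase]
          constructor
          · rintro rfl; exact hi heq.symm
          · simp only [Finset.mem_filter, Finset.mem_univ, true_and]
            rcases eq_or_ne i j with rfl | h1
            · exact fun _ => hi heq.symm
            · rcases eq_or_ne i k with rfl | h2
              · intro _; linarith
              · rw [hv'other i h1 h2] at hi; exact hi
        have hjmem : j ∈ Finset.univ.filter (fun i => w i ≠ v i) := by
          simp only [Finset.mem_filter, Finset.mem_univ, true_and]
          intro h; linarith
        calc (Finset.univ.filter (fun i => w i ≠ v' i)).card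
            ≤ ((Finset.univ.filter (fun i => w i ≠ v i)).erase j).card :=
              Finset.card_le_card hsub
          _ = (Finset.univ.filter (fun i => w i ≠ v i)).card - 1 :=
              Finset.card_erase_of_mem hjmem
          _ ≤ m := by omega
      · have hsub : Finset.univ.filter (fun i => w i ≠ v' i) ⊆
            (Finset.univ.filter (fun i => w i ≠ v i)).erase k := by
          intro i hi
          simp only [Finset.mem_filter, Finset.mem_univ, true_and] at hi
          rw [Finset.mem_erase]
          constructor
          · rintro rfl; exact hi heq.symm
          · simp only [Finset.mem_filter, Finset.mem_univ, true_and]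
            rcases eq_or_ne i j with rfl | h1
            · intro _; linarith
            · rcases eq_or_ne i k with rfl | h2
              · exact fun _ => hi heq.symm
              · rw [hv'other i h1 h2] at hi; exact hi
        have hkmem : k ∈ Finset.univ.filter (fun i => w i ≠ v i) := by
          simp only [Finset.mem_filter, Finset.mem_univ, true_and]
          intro h; linarith
        calc (Finset.univ.filter (fun i => w i ≠ v' i)).card
            ≤ ((Finset.univ.filter (fun i => w i ≠ v i)).erase k).card :=
              Finset.card_le_card hsub
          _ = (Finset.univ.filter (fun i => w i ≠ v i)).card - 1 :=
              Finset.card_erase_of_mem hkmem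
          _ ≤ m := by omega
    -- the T-transform step
    have hstep : N (diagC v') ≤ N (diagC v) := by
      have hmat : diagC v' = ((1 - s : ℝ) : ℂ) • diagC v +
          ((s : ℝ) : ℂ) • diagC (v ∘ (Equiv.swap j k)) := by
        unfold diagC
        ext i i'
        simp only [Matrix.add_apply, Matrix.smul_apply, Matrix.diagonal_apply]
        rcases eq_or_ne i i' with rfl | hne
        · simp only [if_pos rfl, smul_eq_mul]
          have hreal : v' i = (1 - s) * v i + s * (v ∘ (Equiv.swap j k)) i := by
            rcases eq_or_ne i j with rfl | h1
            · simp only [hv'j, Function.comp_apply, Equiv.swap_apply_left]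
              linarith [hsδ]
            · rcases eq_or_ne i k with rfl | h2
              · simp only [hv'k, Function.comp_apply, Equiv.swap_apply_right]
                linarith [hsδ]
              · simp only [hv'other i h1 h2, Function.comp_apply,
                  Equiv.swap_apply_of_ne_of_ne h1 h2]
                ring
          rw [hreal]
          push_cast
          ring
        · simp [hne]
      rw [hmat]
      have h1 := N_convex N hN_add hN_smul hs0.le hs1 (diagC v) (diagC (v ∘ (Equiv.swap j k)))
      have hperm := N_perm N hN_ui v (Equiv.swap j k)
      rw [hperm] at h1
      have h2 : (1 - s) * N (diagC v) + s * N (diagC v) = N (diagC v) := by ring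
      linarith [h1, h2]
    have hIH := IH v' w hv' hw hpre' htot' hcard'
    linarith
end Npart


section cfpart
variable {d : ℕ}
variable {M : Matrix (Fin d) (Fin d) ℂ}

noncomputable def quadF (M : Matrix (Fin d) (Fin d) ℂ) (x : Fin d → ℂ) : ℝ :=
  (dotProduct (star x) (M *ᵥ x)).re

noncomputable def nrm2 (x : Fin d → ℂ) : ℝ := (dotProduct (star x) x).re

lemma nrm2_eq_sum (x : Fin d → ℂ) : nrm2 x = ∑ i, Complex.normSq (x i) := by
  unfold nrm2 dotProduct
  rw [Complex.re_sum]
  congr 1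
  funext i
  simp only [Pi.star_apply, RCLike.star_def]
  rw [show (starRingEnd ℂ) (x i) * x i = x i * (starRingEnd ℂ) (x i) by ring, Complex.mul_conj]
  simp

lemma nrm2_nonneg (x : Fin d → ℂ) : 0 ≤ nrm2 x := by
  rw [nrm2_eq_sum]
  exact Finset.sum_nonneg fun i _ => Complex.normSq_nonneg _

lemma nrm2_pos {x : Fin d → ℂ} (hx : x ≠ 0) : 0 < nrm2 x := by
  rw [nrm2_eq_sum]
  obtain ⟨i, hi⟩ := Function.ne_iff.mp hx
  exact Finset.sum_pos' (fun i _ => Complex.normSq_nonneg _)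
    ⟨i, Finset.mem_univ _, by simpa using Complex.normSq_pos.mpr hi⟩


/-- coordinates of `x` in the eigenbasis -/
noncomputable def coords (hM : M.IsHermitian) (x : Fin d → ℂ) : Fin d → ℂ :=
  (star (hM.eigenvectorUnitary : Matrix (Fin d) (Fin d) ℂ)) *ᵥ x

lemma Vm_mul_star (hM : M.IsHermitian) :
    (hM.eigenvectorUnitary : Matrix (Fin d) (Fin d) ℂ) *
      star (hM.eigenvectorUnitary : Matrix (Fin d) (Fin d) ℂ) = 1 :=
  (Matrix.mem_unitaryGroup_iff).mp (hM.eigenvectorUnitary).2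

lemma star_mul_Vm (hM : M.IsHermitian) :
    star (hM.eigenvectorUnitary : Matrix (Fin d) (Fin d) ℂ) *
      (hM.eigenvectorUnitary : Matrix (Fin d) (Fin d) ℂ) = 1 :=
  (Matrix.mem_unitaryGroup_iff').mp (hM.eigenvectorUnitary).2

lemma star_coords (hM : M.IsHermitian) (x : Fin d → ℂ) :
    star (coords hM x) = (star x) ᵥ* (hM.eigenvectorUnitary : Matrix (Fin d) (Fin d) ℂ) := by
  unfold coords
  rw [Matrix.star_mulVec]
  congr 1
  rw [Matrix.star_eq_conjTranspose, Matrix.conjTranspose_conjTranspose]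

lemma nrm2_coords (hM : M.IsHermitian) (x : Fin d → ℂ) : nrm2 (coords hM x) = nrm2 x := by
  unfold nrm2
  congr 1
  rw [star_coords]
  unfold coords
  rw [Matrix.dotProduct_mulVec, Matrix.vecMul_vecMul, Vm_mul_star hM, Matrix.vecMul_one]

lemma re_star_mul_real_mul (r : ℝ) (z : ℂ) :
    (star z * ((r : ℂ) * z)).re = r * Complex.normSq z := by
  rw [RCLike.star_def, show (starRingEnd ℂ) z * ((r : ℂ) * z)
      = (r : ℂ) * (z * (starRingEnd ℂ) z) by ring, Complex.mul_conj, ← Complex.ofReal_mul]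
  exact Complex.ofReal_re _

lemma quadF_eq_sum (hM : M.IsHermitian) (x : Fin d → ℂ) :
    quadF M x = ∑ j, hM.eigenvalues j * Complex.normSq (coords hM x j) := by
  unfold quadF
  have h1 : M *ᵥ x = (hM.eigenvectorUnitary : Matrix (Fin d) (Fin d) ℂ) *ᵥ
      (diagonal (RCLike.ofReal ∘ hM.eigenvalues) *ᵥ coords hM x) := by
    conv_lhs => rw [hM.spectral_theorem]
    simp only [Unitary.conjStarAlgAut_apply]
    unfold coords
    rw [Matrix.mulVec_mulVec, Matrix.mulVec_mulVec]
  rw [h1, Matrix.dotProduct_mulVec, ← star_coords hM]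
  unfold dotProduct
  rw [Complex.re_sum]
  congr 1
  funext j
  rw [Matrix.mulVec_diagonal]
  exact re_star_mul_real_mul (hM.eigenvalues j) (coords hM x j)

/-- span of a set of eigenvectors -/
noncomputable def spanE (hM : M.IsHermitian) (J : Finset (Fin d)) :
    Submodule ℂ (Fin d → ℂ) :=
  Submodule.span ℂ ((fun j => (⇑(hM.eigenvectorBasis j) : Fin d → ℂ)) '' (J : Set (Fin d)))

lemma coords_eigenvector (hM : M.IsHermitian) (j : Fin d) :
    coords hM (⇑(hM.eigenvectorBasis j)) = Pi.single j 1 :=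
  hM.star_eigenvectorUnitary_mulVec j

lemma coords_zero_of_mem_spanE (hM : M.IsHermitian) (J : Finset (Fin d))
    {x : Fin d → ℂ} (hx : x ∈ spanE hM J) {j : Fin d} (hj : j ∉ J) :
    coords hM x j = 0 := by
  have hφ : ∀ y z : Fin d → ℂ, coords hM (y + z) = coords hM y + coords hM z := by
    intro y z; unfold coords; rw [Matrix.mulVec_add]
  have hφs : ∀ (c : ℂ) (y : Fin d → ℂ), coords hM (c • y) = c • coords hM y := by
    intro c y; unfold coords; rw [Matrix.mulVec_smul]
  induction hx using Submodule.span_induction with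
  | mem y hy =>
    obtain ⟨j', hj', rfl⟩ := hy
    rw [coords_eigenvector hM j']
    have : j' ≠ j := fun h => hj (h ▸ hj')
    exact Pi.single_eq_of_ne (Ne.symm this) 1
  | zero =>
    show coords hM 0 j = 0
    unfold coords; rw [Matrix.mulVec_zero]; rfl
  | add y z _ _ hy hz => rw [hφ y z]; simp [hy, hz]
  | smul c y _ hy => rw [hφs c y]; simp [hy]

lemma finrank_spanE (hM : M.IsHermitian) (J : Finset (Fin d)) :
    Module.finrank ℂ (spanE hM J) = J.card := by
  classical
  have hli : LinearIndependent ℂ (fun j : Fin d => (⇑(hM.eigenvectorBasis j) : Fin d → ℂ)) := by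
    have hUnit : IsUnit (hM.eigenvectorUnitary : Matrix (Fin d) (Fin d) ℂ) :=
      ⟨Unitary.toUnits hM.eigenvectorUnitary, rfl⟩
    have hinj : Function.Injective
        ((hM.eigenvectorUnitary : Matrix (Fin d) (Fin d) ℂ).mulVecLin) :=
      (Matrix.mulVec_injective_iff_isUnit.mpr hUnit)
    have hb := (Pi.basisFun ℂ (Fin d)).linearIndependent
    have h2 := hb.map' ((hM.eigenvectorUnitary : Matrix (Fin d) (Fin d) ℂ).mulVecLin)
      (LinearMap.ker_eq_bot.mpr hinj)
    convert h2 using 1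
    funext j
    simp only [Function.comp_apply, Matrix.mulVecLin_apply, Pi.basisFun_apply]
    simpa using (hM.eigenvectorUnitary_mulVec j).symm
    all_goals rfl
  have hliJ : LinearIndependent ℂ
      (fun j : {x // x ∈ J} => (⇑(hM.eigenvectorBasis j.1) : Fin d → ℂ)) :=
    hli.comp Subtype.val Subtype.val_injective
  have h1 : spanE hM J = Submodule.span ℂ
      (Set.range fun j : {x // x ∈ J} => (⇑(hM.eigenvectorBasis j.1) : Fin d → ℂ)) := by
    unfold spanE
    congr 1
    rw [Set.image_eq_range]
    rfl
  rw [h1, finrank_span_eq_card hliJ]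
  simp

lemma quadF_le_on_spanE (hM : M.IsHermitian) (J : Finset (Fin d)) (r : ℝ)
    (hr : ∀ j ∈ J, hM.eigenvalues j ≤ r) :
    ∀ x ∈ spanE hM J, quadF M x ≤ r * nrm2 x := by
  intro x hx
  rw [quadF_eq_sum hM, ← nrm2_coords hM x, nrm2_eq_sum]
  rw [Finset.mul_sum]
  apply Finset.sum_le_sum
  intro j _
  by_cases hj : j ∈ J
  · exact mul_le_mul_of_nonneg_right (hr j hj) (Complex.normSq_nonneg _)
  · rw [coords_zero_of_mem_spanE hM J hx hj]
    simp

lemma quadF_ge_on_spanE (hM : M.IsHermitian) (J : Finset (Fin d)) (r : ℝ)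
    (hr : ∀ j ∈ J, r ≤ hM.eigenvalues j) :
    ∀ x ∈ spanE hM J, r * nrm2 x ≤ quadF M x := by
  intro x hx
  rw [quadF_eq_sum hM, ← nrm2_coords hM x, nrm2_eq_sum]
  rw [Finset.mul_sum]
  apply Finset.sum_le_sum
  intro j _
  by_cases hj : j ∈ J
  · exact mul_le_mul_of_nonneg_right (hr j hj) (Complex.normSq_nonneg _)
  · rw [coords_zero_of_mem_spanE hM J hx hj]
    simp

lemma cf_le (hM : M.IsHermitian) (i : Fin d) (W : Submodule ℂ (Fin d → ℂ))
    (hrank : (i : ℕ) + 1 ≤ Module.finrank ℂ W) (c : ℝ)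
    (hc : ∀ x ∈ W, c * nrm2 x ≤ quadF M x) :
    c ≤ sortDesc hM.eigenvalues i := by
  classical
  set J : Finset (Fin d) := (Finset.Ici i).image (descPerm hM.eigenvalues) with hJ
  have hcard : J.card = d - (i : ℕ) := by
    rw [hJ, Finset.card_image_of_injective _ (descPerm hM.eigenvalues).injective,
      Fin.card_Ici]
  have hr : ∀ j ∈ J, hM.eigenvalues j ≤ sortDesc hM.eigenvalues i := by
    intro j hj
    rw [hJ, Finset.mem_image] at hj
    obtain ⟨t, ht, rfl⟩ := hj
    rw [Finset.mem_Ici] at ht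
    have := sortDesc_antitone hM.eigenvalues ht
    rwa [sortDesc_eq_comp hM.eigenvalues] at this
  -- intersection is nontrivial
  have hdim : 0 < Module.finrank ℂ ↥(W ⊓ spanE hM J) := by
    have h1 := Submodule.finrank_sup_add_finrank_inf_eq W (spanE hM J)
    have h2 : Module.finrank ℂ ↥(W ⊔ spanE hM J) ≤ d := by
      have := Submodule.finrank_le (W ⊔ spanE hM J)
      rwa [Module.finrank_fintype_fun_eq_card, Fintype.card_fin] at this
    have h3 := finrank_spanE hM J
    have h4 : (i : ℕ) < d := i.isLt
    omega
  have hne : W ⊓ spanE hM J ≠ ⊥ := by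
    intro h
    rw [h] at hdim
    simp at hdim
  obtain ⟨x, hx, hx0⟩ := Submodule.ne_bot_iff _ |>.mp hne
  have h5 := hc x (Submodule.mem_inf.mp hx).1
  have h6 := quadF_le_on_spanE hM J (sortDesc hM.eigenvalues i) hr x (Submodule.mem_inf.mp hx).2
  have h7 := nrm2_pos hx0
  have := le_trans h5 h6
  exact le_of_mul_le_mul_right (by linarith) h7

lemma cf_ge (hM : M.IsHermitian) (i : Fin d) :
    ∃ W : Submodule ℂ (Fin d → ℂ), Module.finrank ℂ W = (i : ℕ) + 1 ∧
      ∀ x ∈ W, sortDesc hM.eigenvalues i * nrm2 x ≤ quadF M x := by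
  classical
  refine ⟨spanE hM ((Finset.Iic i).image (descPerm hM.eigenvalues)), ?_, ?_⟩
  · rw [finrank_spanE,
      Finset.card_image_of_injective _ (descPerm hM.eigenvalues).injective, Fin.card_Iic]
  · apply quadF_ge_on_spanE
    intro j hj
    rw [Finset.mem_image] at hj
    obtain ⟨t, ht, rfl⟩ := hj
    rw [Finset.mem_Iic] at ht
    have := sortDesc_antitone hM.eigenvalues ht
    rwa [sortDesc_eq_comp hM.eigenvalues] at this

lemma quadF_nonneg_of_posSemidef {P : Matrix (Fin d) (Fin d) ℂ} (hP : P.PosSemidef)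
    (x : Fin d → ℂ) : 0 ≤ quadF P x := by
  have := hP.dotProduct_mulVec_nonneg x
  rw [Complex.le_def] at this
  exact by simpa [quadF] using this.1

lemma quadF_sub (M' : Matrix (Fin d) (Fin d) ℂ) (x : Fin d → ℂ) :
    quadF (M' - M) x = quadF M' x - quadF M x := by
  unfold quadF
  rw [Matrix.sub_mulVec, dotProduct_sub, Complex.sub_re]

lemma eig_mono {M' : Matrix (Fin d) (Fin d) ℂ} (hM : M.IsHermitian) (hM' : M'.IsHermitian)
    (hle : (M' - M).PosSemidef) (i : Fin d) :
    sortDesc hM.eigenvalues i ≤ sortDesc hM'.eigenvalues i := by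
  obtain ⟨W, hWr, hWq⟩ := cf_ge hM i
  refine cf_le hM' i W (le_of_eq hWr.symm) _ (fun x hx => ?_)
  have h1 := hWq x hx
  have h2 := quadF_nonneg_of_posSemidef hle x
  rw [quadF_sub M'] at h2
  linarith

lemma eig_conj_le {M' U : Matrix (Fin d) (Fin d) ℂ} (hM : M.IsHermitian) (hM' : M'.IsHermitian)
    (hU : U ∈ Matrix.unitaryGroup (Fin d) ℂ) (heq : M' = Uᴴ * M * U) (i : Fin d) :
    sortDesc hM.eigenvalues i ≤ sortDesc hM'.eigenvalues i := by
  have hUU : Uᴴ * U = 1 := by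
    rw [← Matrix.star_eq_conjTranspose]
    exact Matrix.mem_unitaryGroup_iff'.mp hU
  have hUU' : U * Uᴴ = 1 := by
    rw [← Matrix.star_eq_conjTranspose]
    exact Matrix.mem_unitaryGroup_iff.mp hU
  have hquad : ∀ x : Fin d → ℂ, quadF M' x = quadF M (U *ᵥ x) := by
    intro x
    unfold quadF
    rw [heq]
    rw [show (Uᴴ * M * U) *ᵥ x = Uᴴ *ᵥ (M *ᵥ (U *ᵥ x)) by
      rw [Matrix.mulVec_mulVec, Matrix.mulVec_mulVec]]
    rw [Matrix.dotProduct_mulVec, ← Matrix.star_mulVec]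
  have hnrm : ∀ x : Fin d → ℂ, nrm2 (U *ᵥ x) = nrm2 x := by
    intro x
    unfold nrm2
    rw [Matrix.star_mulVec, Matrix.dotProduct_mulVec, Matrix.vecMul_vecMul, hUU,
      Matrix.vecMul_one]
  obtain ⟨W, hWr, hWq⟩ := cf_ge hM i
  -- the linear equivalence given by multiplication by Uᴴ
  let e : (Fin d → ℂ) ≃ₗ[ℂ] (Fin d → ℂ) :=
    LinearEquiv.ofLinear (Matrix.mulVecLin Uᴴ) (Matrix.mulVecLin U)
      (by rw [← Matrix.mulVecLin_mul, hUU, Matrix.mulVecLin_one])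
      (by rw [← Matrix.mulVecLin_mul, hUU', Matrix.mulVecLin_one])
  refine cf_le hM' i (W.map (e : (Fin d → ℂ) →ₗ[ℂ] (Fin d → ℂ)))
    (le_of_eq (by rw [LinearEquiv.finrank_map_eq]; exact hWr.symm)) _ (fun x hx => ?_)
  obtain ⟨y, hy, rfl⟩ := Submodule.mem_map.mp hx
  have hxy : U *ᵥ ((e : (Fin d → ℂ) →ₗ[ℂ] (Fin d → ℂ)) y) = y := by
    show U *ᵥ (Uᴴ *ᵥ y) = y
    rw [Matrix.mulVec_mulVec, hUU', Matrix.one_mulVec]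
  rw [hquad, hxy]
  have := hWq y hy
  have hn : nrm2 ((e : (Fin d → ℂ) →ₗ[ℂ] (Fin d → ℂ)) y) = nrm2 y := by
    conv_rhs => rw [← hxy]
    rw [hnrm]
  rw [hn]
  exact this

lemma eig_conj_eq {M' U : Matrix (Fin d) (Fin d) ℂ} (hM : M.IsHermitian) (hM' : M'.IsHermitian)
    (hU : U ∈ Matrix.unitaryGroup (Fin d) ℂ) (heq : M' = Uᴴ * M * U) (i : Fin d) :
    sortDesc hM'.eigenvalues i = sortDesc hM.eigenvalues i := by
  refine le_antisymm ?_ (eig_conj_le hM hM' hU heq i)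
  refine eig_conj_le hM' hM (Unitary.star_mem hU) ?_ i
  have hUU' : U * Uᴴ = 1 := by
    rw [← Matrix.star_eq_conjTranspose]
    exact Matrix.mem_unitaryGroup_iff.mp hU
  rw [heq, Matrix.star_eq_conjTranspose, Matrix.conjTranspose_conjTranspose]
  simp only [← Matrix.mul_assoc]
  rw [hUU', Matrix.one_mul, Matrix.mul_assoc, hUU', Matrix.mul_one]

lemma eig_smul {r : ℝ} (hr : 0 < r) (hM : M.IsHermitian)
    (hM' : (((r : ℂ)) • M).IsHermitian) (i : Fin d) :
    sortDesc hM'.eigenvalues i = r * sortDesc hM.eigenvalues i := by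
  have hquad : ∀ x, quadF ((r : ℂ) • M) x = r * quadF M x := by
    intro x
    unfold quadF
    rw [Matrix.smul_mulVec, dotProduct_smul]
    exact Complex.re_ofReal_mul r _
  have h1 : r * sortDesc hM.eigenvalues i ≤ sortDesc hM'.eigenvalues i := by
    obtain ⟨W, hWr, hWq⟩ := cf_ge hM i
    refine cf_le hM' i W (le_of_eq hWr.symm) _ (fun x hx => ?_)
    rw [hquad, mul_assoc]
    exact mul_le_mul_of_nonneg_left (hWq x hx) hr.le
  have h2 : sortDesc hM'.eigenvalues i ≤ r * sortDesc hM.eigenvalues i := by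
    obtain ⟨W, hWr, hWq⟩ := cf_ge hM' i
    have hle := cf_le hM i W (le_of_eq hWr.symm) (sortDesc hM'.eigenvalues i / r)
      (fun x hx => ?_)
    · have := (div_le_iff₀ hr).mp hle
      linarith
    · have h3 := hWq x hx
      rw [hquad] at h3
      rw [div_mul_eq_mul_div, div_le_iff₀ hr]
      linarith
  exact le_antisymm h2 h1
end cfpart


section keypart
variable {d : ℕ}

lemma sum_f_sortDesc (f : ℝ → ℝ) (x : Fin d → ℝ) :
    ∑ i, f (sortDesc x i) = ∑ i, f (x i) := by
  rw [sortDesc_eq_comp]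
  exact Equiv.sum_comp (descPerm x) (fun i => f (x i))

lemma prod_f_sortDesc (f : ℝ → ℝ) (x : Fin d → ℝ) :
    ∏ i, f (sortDesc x i) = ∏ i, f (x i) := by
  rw [sortDesc_eq_comp]
  exact Equiv.prod_comp (descPerm x) (fun i => f (x i))

lemma sortDesc_pos {x : Fin d → ℝ} (hx : ∀ i, 0 < x i) (i : Fin d) : 0 < sortDesc x i := by
  rw [sortDesc_eq_comp]; exact hx _

lemma psd_sandwich (V : Matrix (Fin d) (Fin d) ℂ) (f : Fin d → ℝ) (hf : ∀ j, 0 ≤ f j) :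
    (V * Matrix.diagonal (fun j => (f j : ℂ)) * star V).PosSemidef := by
  rw [Matrix.star_eq_conjTranspose]
  exact (Matrix.posSemidef_diagonal_iff.mpr
    (fun j => Complex.zero_le_real.mpr (hf j))).mul_mul_conjTranspose_same V

lemma posdef_conj {P T : Matrix (Fin d) (Fin d) ℂ} (hP : P.PosDef) (hT : IsUnit T) :
    (Tᴴ * P * T).PosDef := by
  refine Matrix.PosDef.of_dotProduct_mulVec_pos (Matrix.isHermitian_conjTranspose_mul_mul T hP.1) (fun x hx => ?_)
  have hTx : T *ᵥ x ≠ 0 := by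
    intro h
    apply hx
    have hinj := Matrix.mulVec_injective_iff_isUnit.mpr hT
    have := hinj (by rw [h, Matrix.mulVec_zero] : T *ᵥ x = T *ᵥ 0)
    simpa using this
  have := hP.dotProduct_mulVec_pos hTx
  simpa only [Matrix.star_mulVec, Matrix.dotProduct_mulVec, Matrix.vecMul_vecMul,
    Matrix.mulVec_mulVec, Matrix.mul_assoc] using this

/-- The key subset inequality. -/
lemma key_subset {A S C₁ X : Matrix (Fin d) (Fin d) ℂ}
    (hA : A.PosDef) (hS : S.IsHermitian) (hSS : S * S = A)
    (hC₁ : C₁.PosDef) (hX : X.PosDef) (hCX : C₁ = S * X * S)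
    (k : Fin d) (T : Finset (Fin d)) (hT : T.card = (k : ℕ) + 1) :
    ∑ i ∈ T, (Real.log (sortDesc hC₁.isHermitian.eigenvalues i) -
        Real.log (sortDesc hA.isHermitian.eigenvalues i))
      ≤ ∑ i ∈ Finset.Iic k, Real.log (sortDesc hX.isHermitian.eigenvalues i) := by
  classical
  set μ : Fin d → ℝ := hX.isHermitian.eigenvalues with hμ
  have hμpos : ∀ j, 0 < μ j := fun j => hX.eigenvalues_pos j
  set mb : ℝ := sortDesc μ k with hmb
  have hmbpos : 0 < mb := sortDesc_pos hμpos k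
  set Vx : Matrix (Fin d) (Fin d) ℂ := (hX.isHermitian.eigenvectorUnitary :
    Matrix (Fin d) (Fin d) ℂ) with hVx
  set Z : Matrix (Fin d) (Fin d) ℂ :=
    Vx * Matrix.diagonal (fun j => ((max (μ j) mb / mb : ℝ) : ℂ)) * star Vx with hZ
  set X'' : Matrix (Fin d) (Fin d) ℂ :=
    Vx * Matrix.diagonal (fun j => ((max (μ j) mb : ℝ) : ℂ)) * star Vx with hX''
  have hVxU : Vx ∈ Matrix.unitaryGroup (Fin d) ℂ := (hX.isHermitian.eigenvectorUnitary).2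
  have hVx1 : Vx * star Vx = 1 := Matrix.mem_unitaryGroup_iff.mp hVxU
  -- X'' = mb • Z
  have hDsmul : Matrix.diagonal (fun j => ((max (μ j) mb : ℝ) : ℂ)) =
      (mb : ℂ) • Matrix.diagonal (fun j => ((max (μ j) mb / mb : ℝ) : ℂ)) := by
    have h0 : (fun j => ((max (μ j) mb : ℝ) : ℂ)) =
        (mb : ℂ) • (fun j => ((max (μ j) mb / mb : ℝ) : ℂ)) := by
      funext j
      simp only [Pi.smul_apply, smul_eq_mul]
      rw [← Complex.ofReal_mul]
      congr 1
      field_simp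
    rw [h0, Matrix.diagonal_smul]
  have hX''Z : X'' = (mb : ℂ) • Z := by
    rw [hX'', hDsmul, Matrix.mul_smul, Matrix.smul_mul, ← hZ]
  -- X ≤ X''
  have hXle : (X'' - X).PosSemidef := by
    have hXeq : X = Vx * Matrix.diagonal (fun j => ((μ j : ℝ) : ℂ)) * star Vx := by
      have h := hX.isHermitian.spectral_theorem
      rw [Unitary.conjStarAlgAut_apply] at h
      exact h
    have : X'' - X = Vx * Matrix.diagonal (fun j => ((max (μ j) mb - μ j : ℝ) : ℂ)) * star Vx := by
      rw [hX'', hXeq, ← Matrix.sub_mul, ← Matrix.mul_sub, Matrix.diagonal_sub]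
      congr 2
      funext j
      push_cast
      ring
    rw [this]
    exact psd_sandwich Vx _ (fun j => by simp [le_max_left])
  -- Z ≥ 1
  have hZ1 : (Z - 1).PosSemidef := by
    have h1 : (1 : Matrix (Fin d) (Fin d) ℂ) =
        Vx * Matrix.diagonal (fun j => ((1 : ℝ) : ℂ)) * star Vx := by
      rw [show Matrix.diagonal (fun j : Fin d => ((1:ℝ):ℂ)) = (1 : Matrix (Fin d) (Fin d) ℂ) by
        simp [Matrix.diagonal_one], Matrix.mul_one, hVx1]
    have : Z - 1 = Vx * Matrix.diagonal (fun j => ((max (μ j) mb / mb - 1 : ℝ) : ℂ)) * star Vx := by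
      conv_lhs => rw [hZ, h1]
      rw [← Matrix.sub_mul, ← Matrix.mul_sub, Matrix.diagonal_sub]
      congr 2
      funext j
      push_cast
      ring
    rw [this]
    refine psd_sandwich Vx _ (fun j => ?_)
    rw [sub_nonneg, le_div_iff₀ hmbpos, one_mul]
    exact le_max_right _ _
  -- C₁ ≤ S X'' S
  have hCle : (S * X'' * S - C₁).PosSemidef := by
    have heq2 : S * X'' * S - C₁ = Sᴴ * (X'' - X) * S := by
      rw [hCX, hS.eq, Matrix.mul_sub, Matrix.sub_mul]
    rw [heq2]
    exact hXle.conjTranspose_mul_mul_same S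
  -- units
  have hVxu : IsUnit Vx := ⟨Unitary.toUnits hX.isHermitian.eigenvectorUnitary, rfl⟩
  have hdetS : S.det * S.det = A.det := by
    rw [← Matrix.det_mul, hSS]
  have hSu : IsUnit S := by
    rw [Matrix.isUnit_iff_isUnit_det]
    have hdA : A.det ≠ 0 := hA.det_pos.ne'
    have : S.det ≠ 0 := fun h => hdA (by rw [← hdetS, h, mul_zero])
    exact this.isUnit
  -- Z and SZS positive definite
  have hZpd : Z.PosDef := by
    have hdiag : (Matrix.diagonal (fun j => ((max (μ j) mb / mb : ℝ) : ℂ))).PosDef :=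
      Matrix.posDef_diagonal_iff.mpr (fun j => by
        rw [Complex.zero_lt_real]
        positivity)
    have hZeq : Z = (star Vx)ᴴ * Matrix.diagonal (fun j => ((max (μ j) mb / mb : ℝ) : ℂ))
        * (star Vx) := by
      rw [hZ, Matrix.star_eq_conjTranspose, Matrix.conjTranspose_conjTranspose]
    rw [hZeq]
    refine posdef_conj hdiag ?_
    exact ⟨Unitary.toUnits ⟨star Vx, Unitary.star_mem hVxU⟩, rfl⟩
  have hSZSpd : (S * Z * S).PosDef := by
    have := posdef_conj hZpd hSu
    rwa [hS.eq] at this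
  have hSZSle : ((S * Z * S) - A).PosSemidef := by
    have heq3 : (S * Z * S) - A = Sᴴ * (Z - 1) * S := by
      rw [hS.eq, Matrix.mul_sub, Matrix.sub_mul, Matrix.mul_one, hSS]
    rw [heq3]
    exact hZ1.conjTranspose_mul_mul_same S
  -- named eigenvalue sequences
  set asort : Fin d → ℝ := fun i => sortDesc hA.isHermitian.eigenvalues i with hasort
  set csort : Fin d → ℝ := fun i => sortDesc hC₁.isHermitian.eigenvalues i with hcsort
  set esort : Fin d → ℝ := fun i => sortDesc hSZSpd.isHermitian.eigenvalues i with hesort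
  have hapos : ∀ i, 0 < asort i := fun i => sortDesc_pos (fun j => hA.eigenvalues_pos j) i
  have hcpos : ∀ i, 0 < csort i := fun i => sortDesc_pos (fun j => hC₁.eigenvalues_pos j) i
  have hepos : ∀ i, 0 < esort i := fun i => sortDesc_pos (fun j => hSZSpd.eigenvalues_pos j) i
  -- Q = mb • SZS
  have hQherm : (((mb : ℂ)) • (S * Z * S)).IsHermitian := by
    have : (((mb : ℂ)) • (S * Z * S))ᴴ = ((mb : ℂ)) • (S * Z * S) := by
      rw [Matrix.conjTranspose_smul, hSZSpd.isHermitian.eq, Complex.star_def,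
        Complex.conj_ofReal]
    exact this
  have hPeq : S * X'' * S = ((mb : ℂ)) • (S * Z * S) := by
    rw [hX''Z, Matrix.mul_smul, Matrix.smul_mul]
  have haux1 : ∀ i, csort i ≤ mb * esort i := by
    intro i
    have hCleQ : ((((mb : ℂ)) • (S * Z * S)) - C₁).PosSemidef := by
      rw [← hPeq]; exact hCle
    have h1 := eig_mono hC₁.isHermitian hQherm hCleQ i
    have h2 := eig_smul hmbpos hSZSpd.isHermitian hQherm i
    rw [h2] at h1
    exact h1
  have haux2 : ∀ i, asort i ≤ esort i := fun i =>
    eig_mono hA.isHermitian hSZSpd.isHermitian hSZSle i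
  -- pointwise log bound
  have hlog : ∀ i, Real.log (csort i) - Real.log (asort i) ≤
      Real.log mb + (Real.log (esort i) - Real.log (asort i)) := by
    intro i
    have h3 : Real.log (csort i) ≤ Real.log mb + Real.log (esort i) := by
      rw [← Real.log_mul hmbpos.ne' (hepos i).ne']
      exact Real.log_le_log (hcpos i) (haux1 i)
    linarith
  have hg : ∀ i, 0 ≤ Real.log (esort i) - Real.log (asort i) := fun i => by
    have := Real.log_le_log (hapos i) (haux2 i)
    linarith
  -- determinant computation : ∏ eig SZS = ∏ eig A * ∏ z
  have hprod : (∏ i, hSZSpd.isHermitian.eigenvalues i) =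
      (∏ i, hA.isHermitian.eigenvalues i) * ∏ j, (max (μ j) mb / mb) := by
    apply Complex.ofReal_injective
    rw [Complex.ofReal_prod, Complex.ofReal_mul, Complex.ofReal_prod, Complex.ofReal_prod]
    have e1 : (∏ i, (hSZSpd.isHermitian.eigenvalues i : ℂ)) = (S * Z * S).det :=
      (hSZSpd.isHermitian.det_eq_prod_eigenvalues).symm
    have e2 : (∏ i, (hA.isHermitian.eigenvalues i : ℂ)) = A.det :=
      (hA.isHermitian.det_eq_prod_eigenvalues).symm
    have e3 : Z.det = ∏ j, ((max (μ j) mb / mb : ℝ) : ℂ) := by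
      rw [hZ, Matrix.det_mul, Matrix.det_mul]
      have : Vx.det * (star Vx).det = 1 := by
        rw [← Matrix.det_mul, hVx1, Matrix.det_one]
      calc Vx.det * (Matrix.diagonal fun j => ((max (μ j) mb / mb : ℝ) : ℂ)).det * (star Vx).det
          = (Vx.det * (star Vx).det) *
            (Matrix.diagonal fun j => ((max (μ j) mb / mb : ℝ) : ℂ)).det := by ring
        _ = (Matrix.diagonal fun j => ((max (μ j) mb / mb : ℝ) : ℂ)).det := by
            rw [this, one_mul]
        _ = ∏ j, ((max (μ j) mb / mb : ℝ) : ℂ) := Matrix.det_diagonal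
    have e4 : (S * Z * S).det = A.det * Z.det := by
      rw [Matrix.det_mul, Matrix.det_mul, ← hdetS]
      ring
    rw [e1, e2, ← e3, e4]
  -- convert to sums of logs
  have hsum_e : ∑ i, Real.log (esort i) = Real.log (∏ i, hSZSpd.isHermitian.eigenvalues i) := by
    rw [hesort]
    rw [sum_f_sortDesc Real.log]
    exact (Real.log_prod (fun i _ => (hSZSpd.eigenvalues_pos i).ne')).symm
  have hsum_a : ∑ i, Real.log (asort i) = Real.log (∏ i, hA.isHermitian.eigenvalues i) := by
    rw [hasort, sum_f_sortDesc Real.log]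
    exact (Real.log_prod (fun i _ => (hA.eigenvalues_pos i).ne')).symm
  have hzpos : ∀ j, 0 < max (μ j) mb / mb := fun j => by positivity
  have hsum_z : Real.log (∏ j, (max (μ j) mb / mb)) = ∑ j, Real.log (max (μ j) mb / mb) :=
    Real.log_prod (fun j _ => (hzpos j).ne')
  have hlog_z : ∀ j, Real.log (max (μ j) mb / mb) = Real.log (max (μ j) mb) - Real.log mb :=
    fun j => Real.log_div (by positivity : (0:ℝ) < max (μ j) mb).ne' hmbpos.ne'
  -- split the max-sum
  have hmaxsum : ∑ j, Real.log (max (μ j) mb) =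
      (∑ j ∈ Finset.Iic k, Real.log (sortDesc μ j)) +
        ((d : ℝ) - ((k : ℕ) + 1)) * Real.log mb := by
    rw [← sum_f_sortDesc (fun t => Real.log (max t mb)) μ]
    rw [← Finset.sum_add_sum_compl (Finset.Iic k) (fun j => Real.log (max (sortDesc μ j) mb))]
    have ha1 : ∀ j ∈ Finset.Iic k, Real.log (max (sortDesc μ j) mb) =
        Real.log (sortDesc μ j) := by
      intro j hj
      rw [max_eq_left]
      rw [hmb]
      exact sortDesc_antitone μ (Finset.mem_Iic.mp hj)
    have ha2 : ∀ j ∈ (Finset.Iic k)ᶜ, Real.log (max (sortDesc μ j) mb) = Real.log mb := by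
      intro j hj
      rw [max_eq_right]
      rw [hmb]
      apply sortDesc_antitone μ
      rw [Finset.mem_compl, Finset.mem_Iic] at hj
      exact (not_le.mp hj).le
    rw [Finset.sum_congr rfl ha1, Finset.sum_congr rfl ha2, Finset.sum_const]
    have hcard : ((Finset.Iic k)ᶜ : Finset (Fin d)).card = d - ((k : ℕ) + 1) := by
      rw [Finset.card_compl, Fin.card_Iic, Fintype.card_fin]
    rw [hcard, nsmul_eq_mul]
    have hkd : (k : ℕ) + 1 ≤ d := k.isLt
    have : ((d - ((k : ℕ) + 1) : ℕ) : ℝ) = (d : ℝ) - ((k : ℕ) + 1) := by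
      push_cast [Nat.cast_sub hkd]
      ring
    rw [this]
  -- total sum of g
  have hsum_g : ∑ i, (Real.log (esort i) - Real.log (asort i)) =
      (∑ j ∈ Finset.Iic k, Real.log (sortDesc μ j)) - (((k : ℕ) + 1) : ℝ) * Real.log mb := by
    rw [Finset.sum_sub_distrib, hsum_e, hsum_a, hprod,
      Real.log_mul (Finset.prod_pos (fun i _ => hA.eigenvalues_pos i)).ne'
        (Finset.prod_pos (fun j _ => hzpos j)).ne',
      hsum_z]
    have : ∑ j, Real.log (max (μ j) mb / mb) =
        (∑ j, Real.log (max (μ j) mb)) - (d : ℝ) * Real.log mb := by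
      rw [Finset.sum_congr rfl (fun j _ => hlog_z j), Finset.sum_sub_distrib,
        Finset.sum_const, nsmul_eq_mul, Finset.card_univ, Fintype.card_fin]
    rw [this, hmaxsum]
    ring
  -- final chain
  calc ∑ i ∈ T, (Real.log (csort i) - Real.log (asort i))
      ≤ ∑ i ∈ T, (Real.log mb + (Real.log (esort i) - Real.log (asort i))) :=
        Finset.sum_le_sum (fun i _ => hlog i)
    _ = (((k : ℕ) + 1) : ℝ) * Real.log mb +
          ∑ i ∈ T, (Real.log (esort i) - Real.log (asort i)) := by
        rw [Finset.sum_add_distrib, Finset.sum_const, hT, nsmul_eq_mul]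
        push_cast
        ring
    _ ≤ (((k : ℕ) + 1) : ℝ) * Real.log mb +
          ∑ i, (Real.log (esort i) - Real.log (asort i)) := by
        have := Finset.sum_le_sum_of_subset_of_nonneg (Finset.subset_univ T)
          (fun i _ _ => hg i)
        linarith
    _ = ∑ i ∈ Finset.Iic k, Real.log (sortDesc μ i) := by
        rw [hsum_g]
        ring
end keypart


/-- For any unitarily invariant norm `N` and any `C` in the unitary orbit of `B`,
`N(log(A^{-1/2} C A^{-1/2})) ≥ N(D_{log λ(B) - log λ(A)})`. -/
theorem lower_bound_on_orbit (d : ℕ) (A B : Matrix (Fin d) (Fin d) ℂ)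
    (hA : A.PosDef) (hB : B.PosDef)
    (N : Matrix (Fin d) (Fin d) ℂ → ℝ)
    (hN_add : ∀ X Y, N (X + Y) ≤ N X + N Y)
    (hN_smul : ∀ (c : ℂ) (X), N (c • X) = ‖c‖ * N X)
    (hN_def : ∀ X, N X = 0 → X = 0)
    (hN_ui : ∀ (X U V : Matrix (Fin d) (Fin d) ℂ), U ∈ Matrix.unitaryGroup (Fin d) ℂ →
      V ∈ Matrix.unitaryGroup (Fin d) ℂ → N (U * X * V) = N X) :
    ∀ C₁ : Matrix (Fin d) (Fin d) ℂ, (∃ U ∈ Matrix.unitaryGroup (Fin d) ℂ, C₁ = Uᴴ * B * U) →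
      N (Matrix.diagonal (fun i => ((Real.log (sortDesc hB.isHermitian.eigenvalues i)
          - Real.log (sortDesc hA.isHermitian.eigenvalues i) : ℝ) : ℂ))) ≤
        N (matLog (hA.posSemidef.sqrt⁻¹ * C₁ * hA.posSemidef.sqrt⁻¹)) := by
  rintro C₁ ⟨U, hU, hC⟩
  classical
  set S : Matrix (Fin d) (Fin d) ℂ := hA.posSemidef.sqrt with hSdef
  have hS_psd : S.PosSemidef := by
    rw [hSdef]; unfold Matrix.PosSemidef.sqrt
    exact psd_sandwich _ (fun j => Real.sqrt (hA.posSemidef.1.eigenvalues j)) (fun j => Real.sqrt_nonneg _)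
  have hS_herm : S.IsHermitian := hS_psd.1
  have hSS : S * S = A := by
    have hspec := hA.posSemidef.1.spectral_theorem
    rw [Unitary.conjStarAlgAut_apply] at hspec
    have hV := star_mul_Vm hA.posSemidef.1
    rw [hSdef]; unfold Matrix.PosSemidef.sqrt
    conv_rhs => rw [hspec]
    simp only [Unitary.coe_star, Matrix.mul_assoc]
    rw [← Matrix.mul_assoc (star _) _ _, hV, Matrix.one_mul, ← Matrix.mul_assoc (diagonal _),
      diagonal_mul_diagonal]
    congr 3
    funext i
    simp only [Function.comp_apply]
    rw [← RCLike.ofReal_mul, Real.mul_self_sqrt (hA.posSemidef.eigenvalues_nonneg i)]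
  have hUu : IsUnit U := ⟨Unitary.toUnits ⟨U, hU⟩, rfl⟩
  have hC₁pd : C₁.PosDef := by rw [hC]; exact posdef_conj hB hUu
  have hdetS : S.det * S.det = A.det := by rw [← Matrix.det_mul, hSS]
  have hSu : IsUnit S := by
    rw [Matrix.isUnit_iff_isUnit_det]
    have hdA : A.det ≠ 0 := hA.det_pos.ne'
    have hs0 : S.det ≠ 0 := fun h => hdA (by rw [← hdetS, h, mul_zero])
    exact hs0.isUnit
  have hSdetu : IsUnit S.det := (Matrix.isUnit_iff_isUnit_det S).mp hSu
  set X : Matrix (Fin d) (Fin d) ℂ := S⁻¹ * C₁ * S⁻¹ with hXdef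
  have hSinv_herm : S⁻¹.IsHermitian := hS_herm.inv
  have hSiu : IsUnit (S⁻¹) := (Matrix.isUnit_nonsing_inv_iff).mpr hSu
  have hXpd : X.PosDef := by
    have := posdef_conj hC₁pd hSiu
    rwa [hSinv_herm.eq] at this
  have hXh : X.IsHermitian := hXpd.isHermitian
  have hCX : C₁ = S * X * S := by
    rw [hXdef]
    have h1 : S * S⁻¹ = 1 := Matrix.mul_nonsing_inv S hSdetu
    have h2 : S⁻¹ * S = 1 := Matrix.nonsing_inv_mul S hSdetu
    rw [show S * (S⁻¹ * C₁ * S⁻¹) * S = (S * S⁻¹) * C₁ * (S⁻¹ * S) from by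
      simp only [Matrix.mul_assoc]]
    rw [h1, h2, Matrix.one_mul, Matrix.mul_one]
  -- abbreviations
  set μ : Fin d → ℝ := hXh.eigenvalues with hμdef
  have hμpos : ∀ j, 0 < μ j := fun j => hXpd.eigenvalues_pos j
  set w : Fin d → ℝ := fun i => Real.log (sortDesc hB.isHermitian.eigenvalues i)
      - Real.log (sortDesc hA.isHermitian.eigenvalues i) with hwdef
  set v : Fin d → ℝ := fun i => Real.log (sortDesc μ i) with hvdef
  -- Step 1 : N (matLog X) = N (diagC (log ∘ μ))
  have hstep1 : N (matLog X) = N (diagC (fun i => Real.log (μ i))) := by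
    unfold matLog
    rw [dif_pos hXh]
    exact hN_ui _ _ _ (hXh.eigenvectorUnitary).2 (Unitary.star_mem (hXh.eigenvectorUnitary).2)
  -- Step 2 : N (diagC v) = N (diagC (log ∘ μ))
  have hstep2 : N (diagC v) = N (diagC (fun i => Real.log (μ i))) := by
    have hveq : v = (fun i => Real.log (μ i)) ∘ (descPerm μ) := by
      funext i
      rw [hvdef]
      simp only [Function.comp_apply]
      rw [sortDesc_eq_comp μ]
      rfl
    rw [hveq]
    exact N_perm N hN_ui _ _
  -- Step 3 : N (diagC w) = N (diagC (sortDesc w))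
  have hstep3 : N (diagC (sortDesc w)) = N (diagC w) := by
    rw [sortDesc_eq_comp w]
    exact N_perm N hN_ui _ _
  -- eigenvalues of C₁ agree with those of B
  have hBC : ∀ i, sortDesc hC₁pd.isHermitian.eigenvalues i
      = sortDesc hB.isHermitian.eigenvalues i :=
    eig_conj_eq hB.isHermitian hC₁pd.isHermitian hU hC
  -- total sums agree
  have htot : ∑ i, w i = ∑ i, v i := by
    have hsum_w : ∑ i, w i = Real.log (∏ i, hB.isHermitian.eigenvalues i)
        - Real.log (∏ i, hA.isHermitian.eigenvalues i) := by
      rw [hwdef, Finset.sum_sub_distrib, sum_f_sortDesc Real.log, sum_f_sortDesc Real.log,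
        Real.log_prod (fun i _ => (hB.eigenvalues_pos i).ne'),
        Real.log_prod (fun i _ => (hA.eigenvalues_pos i).ne')]
    have hsum_v : ∑ i, v i = Real.log (∏ i, μ i) := by
      rw [hvdef, sum_f_sortDesc Real.log,
        Real.log_prod (fun i _ => (hμpos i).ne')]
    have hprodeq : (∏ i, hA.isHermitian.eigenvalues i) * (∏ i, μ i)
        = ∏ i, hB.isHermitian.eigenvalues i := by
      apply Complex.ofReal_injective
      rw [Complex.ofReal_mul, Complex.ofReal_prod, Complex.ofReal_prod, Complex.ofReal_prod]
      have e1 : (∏ i, (hA.isHermitian.eigenvalues i : ℂ)) = A.det :=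
        (hA.isHermitian.det_eq_prod_eigenvalues).symm
      have e2 : (∏ i, (hB.isHermitian.eigenvalues i : ℂ)) = B.det :=
        (hB.isHermitian.det_eq_prod_eigenvalues).symm
      have e3 : (∏ i, (μ i : ℂ)) = X.det := (hXh.det_eq_prod_eigenvalues).symm
      rw [e1, e2, e3]
      have hdetC₁ : C₁.det = B.det := by
        rw [hC, Matrix.det_mul, Matrix.det_mul]
        have hUU : Uᴴ * U = 1 := by
          rw [← Matrix.star_eq_conjTranspose]
          exact Matrix.mem_unitaryGroup_iff'.mp hU
        have : Uᴴ.det * U.det = 1 := by rw [← Matrix.det_mul, hUU, Matrix.det_one]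
        calc Uᴴ.det * B.det * U.det = (Uᴴ.det * U.det) * B.det := by ring
          _ = B.det := by rw [this, one_mul]
      have hdetC₂ : C₁.det = A.det * X.det := by
        rw [hCX, Matrix.det_mul, Matrix.det_mul, ← hdetS]
        ring
      rw [← hdetC₁, hdetC₂]
    have hApos : (0:ℝ) < ∏ i, hA.isHermitian.eigenvalues i :=
      Finset.prod_pos (fun i _ => hA.eigenvalues_pos i)
    have hμprodpos : (0:ℝ) < ∏ i, μ i := Finset.prod_pos (fun i _ => hμpos i)
    rw [hsum_w, hsum_v, ← hprodeq, Real.log_mul hApos.ne' hμprodpos.ne']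
    ring
  -- prefix sums
  have hpre : ∀ n : ℕ, ∑ i ∈ FF n, sortDesc w i ≤ ∑ i ∈ FF n, v i := by
    intro n
    rcases Nat.eq_zero_or_pos n with rfl | hn
    · rw [FF_zero]
      simp
    · rcases le_or_gt n d with hnd | hnd
      · set k : Fin d := ⟨n - 1, by omega⟩ with hkdef
        have hkn : (k : ℕ) + 1 = n := by
          rw [hkdef]
          simp
          omega
        have hFF : (FF n : Finset (Fin d)) = Finset.Iic k := by rw [← hkn, FF_succ_eq_Iic]
        rw [hFF]
        set T : Finset (Fin d) := (Finset.Iic k).image (descPerm w) with hTdef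
        have hTcard : T.card = (k : ℕ) + 1 := by
          rw [hTdef, Finset.card_image_of_injective _ (descPerm w).injective, Fin.card_Iic]
        have hsum_w' : ∑ i ∈ Finset.Iic k, sortDesc w i = ∑ i ∈ T, w i := by
          rw [hTdef, Finset.sum_image (fun x _ y _ h => (descPerm w).injective h)]
          rw [sortDesc_eq_comp w]
          rfl
        rw [hsum_w']
        have hwc : ∀ i, w i = Real.log (sortDesc hC₁pd.isHermitian.eigenvalues i)
            - Real.log (sortDesc hA.isHermitian.eigenvalues i) := by
          intro i
          rw [hwdef, hBC i]
        calc ∑ i ∈ T, w i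
            = ∑ i ∈ T, (Real.log (sortDesc hC₁pd.isHermitian.eigenvalues i)
              - Real.log (sortDesc hA.isHermitian.eigenvalues i)) :=
            Finset.sum_congr rfl (fun i _ => hwc i)
          _ ≤ ∑ i ∈ Finset.Iic k, Real.log (sortDesc hXh.eigenvalues i) :=
            key_subset hA hS_herm hSS hC₁pd hXpd hCX k T hTcard
          _ = ∑ i ∈ Finset.Iic k, v i := by rfl
      · rw [FF_big hnd.le]
        rw [sortDesc_sum w]
        rw [htot]
  -- apply majorization
  have hmaj := maj_le N hN_add hN_smul hN_ui
    ((Finset.univ.filter (fun i => sortDesc w i ≠ v i)).card) v (sortDesc w)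
    (fun i j hij => by
      exact Real.log_le_log (sortDesc_pos hμpos j) (sortDesc_antitone μ hij))
    (sortDesc_antitone w) hpre (by rw [sortDesc_sum w]; exact htot) (le_refl _)
  have hgoal : N (diagC w) ≤ N (matLog X) := by
    rw [← hstep3, hstep1, ← hstep2]
    exact hmaj
  exact hgoal
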